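/- arXiv:2411.03567 — 3 statements merged into one kernel-verified Lean document; each statement's English description precedes it below -/
import Mathlib

section
/- Let G be a finite simple graph with adjacency matrix A_G over ℚ, and let u be a vertex of G. Let A_{G−u} denote the adjacency matrix of the induced subgraph of G on the vertex set V(G) \ {u}. Then, in the ring ℚ⟦t⟧ of formal power series, (∑_{d≥0} w_d^u · t^d) · det(1 − t·A_G) = det(1 − t·A_{G−u}), where w_d^u is the number of closed walks of length d at u in G (so w_0^u = 1), and det(1 − t·M) denotes the determinant of the matrix 1 − t·M with entries in ℚ⟦t⟧. -/
open Matrix PowerSeries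

lemma adjugate_apply_self_eq_det_minor {n : Type*} [Fintype n] [DecidableEq n]
    {R : Type*} [CommRing R] (M : Matrix n n R) (u : n) :
    M.adjugate u u =
      (M.submatrix (fun v : {v : n // v ≠ u} => (v : n))
        (fun v : {v : n // v ≠ u} => (v : n))).det := by
  classical
  rw [Matrix.adjugate_apply]
  set M' := M.updateRow u (Pi.single u 1) with hM'
  let e : {v : n // v = u} ⊕ {v : n // ¬ v = u} ≃ n := Equiv.sumCompl (fun v => v = u)
  rw [← Matrix.det_submatrix_equiv_self e, ← Matrix.fromBlocks_toBlocks (M'.submatrix e e)]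
  have h12 : (M'.submatrix e e).toBlocks₁₂ = 0 := by
    ext ⟨v, hv⟩ ⟨w, hw⟩
    simp only [Matrix.toBlocks₁₂, Matrix.of_apply, Matrix.submatrix_apply, Matrix.zero_apply]
    subst hv
    simp [e, hM', Pi.single_apply, Ne.symm hw]
  rw [h12, Matrix.det_fromBlocks_zero₁₂]
  have h11 : ((M'.submatrix e e).toBlocks₁₁).det = 1 := by
    haveI : Subsingleton {v : n // v = u} := ⟨fun a b => Subtype.ext (a.2.trans b.2.symm)⟩
    rw [Matrix.det_eq_elem_of_subsingleton _ ⟨u, rfl⟩]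
    simp [Matrix.toBlocks₁₁, e, hM']
  rw [h11, one_mul]
  congr 1
  ext ⟨v, hv⟩ ⟨w, hw⟩
  simp [Matrix.toBlocks₂₂, e, hM', Matrix.updateRow_apply, hv]

/-- Jacobi's identity.  For a finite simple graph `G` with adjacency
matrix `A_G` over `ℚ` and a vertex `u`, in `ℚ⟦t⟧` we have
`(∑_{d≥0} w_d^u t^d) · det(1 - t·A_G) = det(1 - t·A_{G-u})`, where `w_d^u` is the number
of closed walks of length `d` at `u` and `A_{G-u}` is the adjacency matrix of the induced
subgraph on `V(G) \ {u}`. -/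
theorem stmt_0 {V : Type} [Fintype V] [DecidableEq V]
    (G : SimpleGraph V) [DecidableRel G.Adj] (u : V) :
    (PowerSeries.mk fun d : ℕ => (Nat.card {p : G.Walk u u // p.length = d} : ℚ)) *
      (1 - (PowerSeries.X : PowerSeries ℚ) • G.adjMatrix (PowerSeries ℚ)).det =
      (1 - (PowerSeries.X : PowerSeries ℚ) •
          (G.adjMatrix (PowerSeries ℚ)).submatrix
            (fun v : {v : V // v ≠ u} => (v : V))
            (fun v : {v : V // v ≠ u} => (v : V))).det := by
  classical
  set A : Matrix V V ℚ := G.adjMatrix ℚ with hA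
  set A' : Matrix V V (PowerSeries ℚ) := G.adjMatrix (PowerSeries ℚ) with hA'
  set B : Matrix V V (PowerSeries ℚ) := 1 - (PowerSeries.X : PowerSeries ℚ) • A' with hB
  set N : Matrix V V (PowerSeries ℚ) :=
    Matrix.of (fun i j => PowerSeries.mk fun d => ((A ^ d) i j)) with hN
  have hAPS : ∀ v j, A' v j = PowerSeries.C (A v j) := by
    intro v j
    by_cases h : G.Adj v j <;> simp [hA, hA', h]
  have hNA : ∀ i j d, (PowerSeries.coeff d) ((N * A') i j) = (A ^ (d + 1)) i j := by
    intro i j d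
    rw [Matrix.mul_apply, map_sum]
    simp_rw [hAPS, PowerSeries.coeff_mul_C, hN, Matrix.of_apply, PowerSeries.coeff_mk]
    rw [pow_succ, Matrix.mul_apply]
  have hNB : N * B = 1 := by
    have : N * B = N - (PowerSeries.X : PowerSeries ℚ) • (N * A') := by
      rw [hB, Matrix.mul_sub, Matrix.mul_one, Matrix.mul_smul]
    rw [this]
    ext i j d
    simp only [Matrix.sub_apply, Matrix.smul_apply, smul_eq_mul, map_sub]
    cases d with
    | zero =>
        simp only [map_sub, PowerSeries.coeff_zero_eq_constantCoeff_apply, _root_.map_mul,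
          PowerSeries.constantCoeff_X, zero_mul, sub_zero]
        have : (PowerSeries.constantCoeff) (N i j) = (A ^ 0) i j := by
          rw [hN]; simp
        rw [this, pow_zero]
        by_cases h : i = j <;> simp [h, Matrix.one_apply]
    | succ d =>
        rw [PowerSeries.coeff_succ_X_mul, hNA]
        have : (PowerSeries.coeff (d + 1)) (N i j) = (A ^ (d + 1)) i j := by
          rw [hN]; simp
        rw [this, sub_self]
        by_cases h : i = j <;> simp [h, Matrix.one_apply]
  have hadj : B.adjugate = B.det • N := by
    calc B.adjugate = (N * B) * B.adjugate := by rw [hNB, Matrix.one_mul]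
      _ = N * (B * B.adjugate) := by rw [Matrix.mul_assoc]
      _ = N * (B.det • 1) := by rw [Matrix.mul_adjugate]
      _ = B.det • N := by rw [Matrix.mul_smul, Matrix.mul_one]
  have hNu : N u u =
      PowerSeries.mk fun d : ℕ => (Nat.card {p : G.Walk u u // p.length = d} : ℚ) := by
    ext d
    simp only [hN, Matrix.of_apply, PowerSeries.coeff_mk, hA]
    rw [SimpleGraph.adjMatrix_pow_apply_eq_card_walk]
    norm_cast
    rw [Nat.card_eq_fintype_card]
    exact Fintype.card_congr (Equiv.refl _)
  have hsub : (1 - (PowerSeries.X : PowerSeries ℚ) •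
        A'.submatrix (fun v : {v : V // v ≠ u} => (v : V)) (fun v : {v : V // v ≠ u} => (v : V)))
      = B.submatrix (fun v : {v : V // v ≠ u} => (v : V)) (fun v : {v : V // v ≠ u} => (v : V)) := by
    ext v w
    simp [hB, Matrix.one_apply, Subtype.coe_inj]
  rw [hsub, ← adjugate_apply_self_eq_det_minor B u, hadj]
  simp only [Matrix.smul_apply, smul_eq_mul, hNu]
  ring
end

section
/- Let B be a set with a reflexive symmetric relation R, and let H = (Ω, ≤, ℓ) be a finite heap over (B, R). Fix ω ∈ Ω, let Ω₁ = {x ∈ Ω : x ≤ ω} and Ω₂ = Ω \ Ω₁. Then: (1) Ω₁, with the restricted order and labeling, is a pyramid whose unique maximal element is ω; (2) the maximal elements of Ω₂ (with the restricted order) are exactly the maximal elements of Ω other than ω; (3) the partial order ≤ on Ω coincides with the reflexive–transitive closure of the union of the three relations: ≤ restricted to Ω₁, ≤ restricted to Ω₂, and {(x, y) : x ∈ Ω₁, y ∈ Ω₂, ℓ(x) R ℓ(y)}; that is, H equals the composition H₁ ∘ H₂ of the down-set heap H₁ = (Ω₁, ≤, ℓ) and the complementary heap H₂ = (Ω₂,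 ≤, ℓ). -/
/-- Let `B` be a set of pieces with a reflexive symmetric concurrence
relation `R`, and let `H = (Ω, ≤, ℓ)` be a finite heap over `(B, R)`.  Fix `ω ∈ Ω`, and
let `Ω₁ = {x : x ≤ ω}`, `Ω₂ = Ω \ Ω₁`.  Then:
(1) `Ω₁` with the restricted order and labeling is a pyramid whose unique maximal element
is `ω`;
(2) the restriction to `Ω₂` is a heap whose maximal elements are exactly the maximal
elements of `Ω` other than `ω`;
(3) `≤` on `Ω` is the reflexive–transitive closure of the union of `≤` restricted to
`Ω₁`, `≤` restricted to `Ω₂`, and `{(x,y) : x ∈ Ω₁, y ∈ Ω₂, ℓ(x) R ℓ(y)}`; i.e.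
`H = H₁ ∘ H₂`. -/
theorem stmt_4 {B Ω : Type} [Fintype Ω] [PartialOrder Ω]
    (R : B → B → Prop) (hRrefl : ∀ b, R b b) (hRsymm : ∀ b c, R b c → R c b)
    (ℓ : Ω → B)
    (heap1 : ∀ x y : Ω, R (ℓ x) (ℓ y) → x ≤ y ∨ y ≤ x)
    (heap2 : ∀ x y : Ω, x ⋖ y → R (ℓ x) (ℓ y))
    (ω : Ω) :
    -- (1) : the down-set of ω is a pyramid with unique maximal element ω
    ((∀ x y : {z : Ω // z ≤ ω}, x ⋖ y → R (ℓ x.1) (ℓ y.1)) ∧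
      (∀ x : {z : Ω // z ≤ ω}, IsMax x ↔ x.1 = ω)) ∧
    -- (2) : the complement is a heap whose maximal elements are those of Ω other than ω
    ((∀ x y : {z : Ω // ¬ z ≤ ω}, x ⋖ y → R (ℓ x.1) (ℓ y.1)) ∧
      (∀ y : Ω, (∃ h : ¬ y ≤ ω, IsMax (⟨y, h⟩ : {z : Ω // ¬ z ≤ ω})) ↔
        (IsMax y ∧ y ≠ ω))) ∧
    -- (3) : the order of H is recovered as the composition H₁ ∘ H₂
    (∀ x y : Ω, x ≤ y ↔
      Relation.ReflTransGen (fun a b =>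
        (a ≤ ω ∧ b ≤ ω ∧ a ≤ b) ∨
        (¬ a ≤ ω ∧ ¬ b ≤ ω ∧ a ≤ b) ∨
        (a ≤ ω ∧ ¬ b ≤ ω ∧ R (ℓ a) (ℓ b))) x y) := by
  classical
  refine ⟨⟨?_, ?_⟩, ⟨?_, ?_⟩, ?_⟩
  · -- (1a) covers in the down-set are covers in Ω
    rintro x y ⟨hlt, hbetween⟩
    refine heap2 x.1 y.1 ⟨hlt, fun z hz hz' => ?_⟩
    exact hbetween (c := ⟨z, hz'.le.trans y.2⟩) hz hz'
  · -- (1b) unique maximal element is ω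
    intro x
    constructor
    · intro hmax
      have := hmax (b := ⟨ω, le_refl ω⟩) x.2
      exact le_antisymm x.2 this
    · intro hx b hb
      show b.1 ≤ x.1
      rw [hx]
      exact b.2
  · -- (2a) covers in the complement are covers in Ω
    rintro x y ⟨hlt, hbetween⟩
    refine heap2 x.1 y.1 ⟨hlt, fun z hz hz' => ?_⟩
    have hz2 : ¬ z ≤ ω := fun h => x.2 (hz.le.trans h)
    exact hbetween (c := ⟨z, hz2⟩) hz hz'
  · -- (2b) maximal elements of the complement
    intro y
    constructor
    · rintro ⟨h, hmax⟩
      refine ⟨fun b hb => ?_, fun hyω => h (hyω ▸ le_refl y)⟩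
      have hb2 : ¬ b ≤ ω := fun hbω => h (hb.trans hbω)
      exact hmax (b := ⟨b, hb2⟩) hb
    · rintro ⟨hmax, hne⟩
      have h : ¬ y ≤ ω := fun hyω => hne (le_antisymm hyω (hmax hyω))
      exact ⟨h, fun b hb => hmax hb⟩
  · -- (3) the order is the composition
    intro x y
    constructor
    · intro hxy
      by_cases hy : y ≤ ω
      · exact Relation.ReflTransGen.single (Or.inl ⟨hxy.trans hy, hy, hxy⟩)
      by_cases hx : x ≤ ω
      · -- decompose x ≤ y into covers
        letI := Fintype.toLocallyFiniteOrder (α := Ω)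
        have hc : Relation.ReflTransGen (· ⋖ ·) x y :=
          le_iff_reflTransGen_covBy.mp hxy
        refine Relation.ReflTransGen.mono (fun a b hab => ?_) x y hc
        by_cases ha : a ≤ ω
        · by_cases hb : b ≤ ω
          · exact Or.inl ⟨ha, hb, hab.le⟩
          · exact Or.inr (Or.inr ⟨ha, hb, heap2 a b hab⟩)
        · have hb : ¬ b ≤ ω := fun h => ha (hab.le.trans h)
          exact Or.inr (Or.inl ⟨ha, hb, hab.le⟩)
      · exact Relation.ReflTransGen.single (Or.inr (Or.inl ⟨hx, hy, hxy⟩))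
    · intro h
      induction h with
      | refl => exact le_refl x
      | tail _ hstep ih =>
        rcases hstep with ⟨_, _, hle⟩ | ⟨_, _, hle⟩ | ⟨ha, hb, hR⟩
        · exact ih.trans hle
        · exact ih.trans hle
        · rcases heap1 _ _ hR with hle | hle
          · exact ih.trans hle
          · exact absurd (hle.trans ha) hb
end

section
/- Let D be a multi-digraph and fix an edge e of D. The map sending each closed trail of D ending at e to its cycle sequence is injective; moreover, for every closed trail w ending at e with cycle sequence (β₁, …, β_m), the edge e belongs to the last cycle β_m. -/
/-- `DWalkFrom ψ u v l` : the list of edges `l` forms a directed walk from `u` to `v`. -/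
def DWalkFrom {V E : Type} (ψ : E → V × V) : V → V → List E → Prop
  | u, v, [] => u = v
  | u, v, e :: l => (ψ e).1 = u ∧ DWalkFrom ψ (ψ e).2 v l

/-- `DCycleSeq ψ u l L` : `L` is the cycle sequence of the closed trail with edge list
`l` based at `u`.  It is obtained recursively by splitting `l = α ++ w₁ ++ γ` where `α`
is a path from `u` (no repeated vertices) ending at the first repeated vertex `x` of the
trail, `w₁` is the first simple closed subtrail (a closed trail at `x` whose vertices
`x, y₁, …` are pairwise distinct, the internal ones being disjoint from `α`), recording
the cycle `[w₁]` (a cycle of a digraph being determined by its edge set) and continuing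
with the remainder `α ++ γ`. -/
inductive DCycleSeq {V E : Type} [DecidableEq E] (ψ : E → V × V) :
    V → List E → List (Finset E) → Prop
  | nil (u : V) : DCycleSeq ψ u [] []
  | cons (u x : V) (a w1 g : List E) (L : List (Finset E)) :
      DWalkFrom ψ u x a →
      (u :: a.map fun e => (ψ e).2).Nodup →
      w1 ≠ [] →
      DWalkFrom ψ x x w1 →
      (x :: w1.dropLast.map fun e => (ψ e).2).Nodup →
      (∀ v ∈ w1.dropLast.map fun e => (ψ e).2,
        v ∉ (u :: a.map fun e => (ψ e).2)) →
      DCycleSeq ψ u (a ++ g) L →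
      DCycleSeq ψ u (a ++ (w1 ++ g)) (w1.toFinset :: L)

namespace Aux
variable {V E : Type} {ψ : E → V × V}

theorem walk_append {p : List E} : ∀ {u v : V} {q : List E},
    DWalkFrom ψ u v (p ++ q) ↔ ∃ w, DWalkFrom ψ u w p ∧ DWalkFrom ψ w v q := by
  induction p with
  | nil => intro u v q; simp [DWalkFrom]
  | cons e t ih =>
    intro u v q
    constructor
    · rintro ⟨h1, h2⟩
      obtain ⟨w, h3, h4⟩ := ih.mp h2
      exact ⟨w, ⟨h1, h3⟩, h4⟩
    · rintro ⟨w, ⟨h1, h3⟩, h4⟩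
      exact ⟨h1, ih.mpr ⟨w, h3, h4⟩⟩

theorem walk_end_unique : ∀ {l : List E} {u v v' : V},
    DWalkFrom ψ u v l → DWalkFrom ψ u v' l → v = v' := by
  intro l
  induction l with
  | nil => intro u v v' h h'; exact h.symm.trans h'
  | cons e t ih => intro u v v' h h'; exact ih h.2 h'.2

theorem walk_getLast : ∀ {l : List E} {u v : V}, DWalkFrom ψ u v l →
    (u :: l.map fun e => (ψ e).2).getLast (by simp) = v := by
  intro l
  induction l with
  | nil => intro u v h; have h' : u = v := h; simpa using h'
  | cons e t ih =>
    intro u v h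
    rw [List.map_cons, List.getLast_cons (by simp)]
    exact ih h.2

theorem uniqueWalk [DecidableEq E] : ∀ {w : List E} {w' : List E} {y z : V},
    DWalkFrom ψ y z w → DWalkFrom ψ y z w' →
    (w.map fun e => (ψ e).1).Nodup → w.Nodup → w'.Nodup →
    w.toFinset = w'.toFinset → w = w' := by
  intro w
  induction w with
  | nil =>
    intro w' y z h h' _ _ _ hfin
    have : w'.toFinset = ∅ := by simpa using hfin.symm
    simpa using (List.toFinset_eq_empty_iff w').mp this |>.symm
  | cons e1 t ih =>
    intro w' y z h h' hsrc hnd hnd' hfin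
    match w' with
    | [] =>
      exfalso
      have : e1 ∈ (List.nil : List E).toFinset := by
        rw [← hfin]; simp
      simpa using this
    | e2 :: t' =>
      have he2 : e2 ∈ (e1 :: t).toFinset := by rw [hfin]; simp
      simp only [List.mem_toFinset, List.mem_cons] at he2
      have he12 : e2 = e1 := by
        rcases he2 with h1 | h2
        · exact h1
        · exfalso
          have hy2 : (ψ e2).1 = y := h'.1
          have hy1 : (ψ e1).1 = y := h.1
          have : y ∈ t.map fun e => (ψ e).1 := by
            rw [← hy2]; exact List.mem_map_of_mem h2
          rw [← hy1] at this
          exact (List.nodup_cons.mp (by simpa using hsrc)).1 this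
      subst he12
      have hteq : t.toFinset = t'.toFinset := by
        have h1 : e2 ∉ t := (List.nodup_cons.mp hnd).1
        have h2 : e2 ∉ t' := (List.nodup_cons.mp hnd').1
        have := congrArg (fun s => Finset.erase s e2) hfin
        simpa [List.toFinset_cons, Finset.erase_insert, h1, h2,
          List.mem_toFinset] using this
      have := ih h.2 h'.2 ((by simpa using hsrc : ((ψ e2).1 :: t.map fun e => (ψ e).1).Nodup)).of_cons
        (List.nodup_cons.mp hnd).2 (List.nodup_cons.mp hnd').2 hteq
      rw [this]

theorem seq_nil [DecidableEq E] {u : V} {l : List E}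
    (h : DCycleSeq ψ u l []) : l = [] := by
  cases h; rfl

/-- a trail with a nonempty cycle sequence has a repeated vertex -/
theorem cyc_repeat [DecidableEq E] {u : V} {l : List E} {s : Finset E}
    {L : List (Finset E)} (h : DCycleSeq ψ u l (s :: L)) :
    ¬ (u :: l.map fun e => (ψ e).2).Nodup := by
  cases h with
  | cons x a w1 g L ha hand hw1ne hw1 hw1nd hdisj hrec =>
    intro hnd
    -- the vertex x occurs at positions a.length and a.length + w1.length
    set f : E → V := fun e => (ψ e).2 with hf
    have h1 : (u :: a.map f) ≠ [] := by simp
    have hA : (u :: a.map f) = (u :: a.map f).dropLast ++ [x] := by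
      rw [← walk_getLast ha]
      exact (List.dropLast_append_getLast h1).symm
    have hw1m : w1.map f ≠ [] := by simpa using hw1ne
    have hW : w1.map f = (w1.map f).dropLast ++ [x] := by
      have h2 := walk_getLast hw1
      rw [List.getLast_cons (by simpa using hw1ne)] at h2
      rw [← h2]
      exact (List.dropLast_append_getLast hw1m).symm
    have : List.Sublist [x, x] (u :: (a ++ (w1 ++ g)).map f) := by
      have hx1 : List.Sublist [x] (w1.map f) := by
        rw [hW]; exact (List.sublist_append_right _ _)
      have hx2 : List.Sublist [x, x] ([x] ++ (w1.map f ++ g.map f)) := by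
        refine List.cons_sublist_cons.mpr ?_
        exact hx1.trans (List.sublist_append_left _ _)
      have hx3 : List.Sublist [x, x] ((u :: a.map f) ++ (w1.map f ++ g.map f)) := by
        rw [hA, List.append_assoc]
        exact hx2.trans (List.sublist_append_right _ _)
      simpa using hx3
    have := hnd.sublist this
    simp at this

theorem mem_of_getLast? {α : Type*} {l : List α} {x : α} (h : l.getLast? = some x) :
    x ∈ l := by
  have hne : l ≠ [] := by rintro rfl; simp at h
  rw [List.getLast?_eq_getLast hne] at h
  rw [← Option.some_inj.mp h]
  exact List.getLast_mem hne

theorem getLast?_append_left {α : Type*} {l l' : List α} (h : l' ≠ []) :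
    (l ++ l').getLast? = l'.getLast? := by
  rw [List.getLast?_append]
  have : l'.getLast?.isSome := List.getLast?_isSome.mpr h
  cases hl : l'.getLast? with
  | none => rw [hl] at this; simp at this
  | some a => simp

theorem lastMem [DecidableEq E] {u : V} {l : List E} {L : List (Finset E)}
    (h : DCycleSeq ψ u l L) : ∀ x : E, l.getLast? = some x →
    ∃ c, L.getLast? = some c ∧ x ∈ c := by
  induction h with
  | nil => intro x hx; simp at hx
  | cons x a w1 g L ha hand hw1ne hw1 hw1nd hdisj hrec ih =>
    intro y hy
    by_cases hg : g = []
    · subst hg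
      -- then L = [] and a = []
      have hL : L = [] := by
        cases L with
        | nil => rfl
        | cons s' L'' =>
          exact absurd hand (cyc_repeat (by simpa using hrec))
      subst hL
      have haa : a = [] := by simpa using seq_nil hrec
      subst haa
      simp only [List.nil_append, List.append_nil] at hy ⊢
      exact ⟨w1.toFinset, rfl, List.mem_toFinset.mpr (mem_of_getLast? hy)⟩
    · have h1 : (a ++ (w1 ++ g)).getLast? = g.getLast? := by
        rw [getLast?_append_left (by simp [hg]), getLast?_append_left hg]
      have h2 : (a ++ g).getLast? = some y := by
        rw [getLast?_append_left hg, ← h1, hy]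
      obtain ⟨c, hc, hyc⟩ := ih y h2
      have hLne : L ≠ [] := by rintro rfl; simp at hc
      refine ⟨c, ?_, hyc⟩
      rw [show w1.toFinset :: L = [w1.toFinset] ++ L from rfl,
        getLast?_append_left hLne]
      exact hc

/-- the sources of a nonempty walk are the start followed by the internal targets -/
theorem walk_sources : ∀ {l : List E} {y v : V}, DWalkFrom ψ y v l → l ≠ [] →
    (l.map fun e => (ψ e).1) = y :: (l.dropLast.map fun e => (ψ e).2) := by
  intro l
  induction l with
  | nil => intro y v h hne; exact absurd rfl hne
  | cons e t ih =>
    intro y v h _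
    cases t with
    | nil => simp [h.1]
    | cons e' t' =>
      rw [List.map_cons, h.1, ih h.2 (by simp),
        show (e :: e' :: t').dropLast = e :: (e' :: t').dropLast from
          List.dropLast_cons_of_ne_nil (by simp), List.map_cons]

/-- the targets of a nonempty walk are the internal targets followed by the endpoint -/
theorem walk_targets {l : List E} {y v : V} (h : DWalkFrom ψ y v l) (hne : l ≠ []) :
    (l.map fun e => (ψ e).2) = (l.dropLast.map fun e => (ψ e).2) ++ [v] := by
  have h2 := walk_getLast h
  rw [List.getLast_cons (by simpa using hne)] at h2
  rw [← h2, List.map_dropLast]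
  exact (List.dropLast_append_getLast (by simpa using hne)).symm

/-- impossibility of two decompositions with different initial-path lengths -/
theorem no_strict [DecidableEq V] [DecidableEq E] {u x₁ x₂ : V} {a₁ g₁ a₂ g₂ w₁ w₂ : List E}
    (hr : a₁ ++ g₁ = a₂ ++ g₂)
    (k₁ : DWalkFrom ψ u x₁ a₁) (k₂ : DWalkFrom ψ u x₂ a₂)
    (nd₂ : (u :: a₂.map fun e => (ψ e).2).Nodup)
    (disj₂ : ∀ v ∈ w₂.dropLast.map fun e => (ψ e).2,
      v ∉ (u :: a₂.map fun e => (ψ e).2))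
    (hw₁ne : w₁ ≠ []) (hw₂ne : w₂ ≠ [])
    (c₁ : DWalkFrom ψ x₁ x₁ w₁) (c₂ : DWalkFrom ψ x₂ x₂ w₂)
    (hfin : w₁.toFinset = w₂.toFinset)
    (hlt : a₁.length < a₂.length) : False := by
  set f : E → V := fun e => (ψ e).2 with hff
  -- a₁ is a proper prefix of a₂
  have hpre : a₁ <+: a₂ := by
    refine List.prefix_of_prefix_length_le ?_ (List.prefix_append a₂ g₂) hlt.le
    rw [← hr]; exact List.prefix_append a₁ g₁
  obtain ⟨t, ht⟩ := hpre
  have htne : t ≠ [] := by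
    rintro rfl
    rw [List.append_nil] at ht
    exact absurd (congrArg List.length ht) (Nat.ne_of_lt hlt)
  have hA2 : (u :: a₂.map f) = (u :: a₁.map f) ++ t.map f := by
    rw [← ht, List.map_append]; rfl
  -- x₁ is a vertex of a₂'s vertex list
  have hx1l : x₁ ∈ (u :: a₁.map f) := by
    rw [← walk_getLast k₁]
    exact List.getLast_mem _
  have hx1mem : x₁ ∈ (u :: a₂.map f) := by
    rw [hA2]
    exact List.mem_append_left _ hx1l
  by_cases hxx : x₁ = x₂
  · -- x₂ occurs both in the a₁-part and in the t-part: contradicts nd₂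
    have htm : t.map f ≠ [] := by simpa using htne
    have hx2t : x₂ ∈ t.map f := by
      obtain ⟨z, hz1, hz2⟩ := walk_append.mp (ht ▸ k₂ : DWalkFrom ψ u x₂ (a₁ ++ t))
      have hzx : z = x₁ := walk_end_unique hz1 k₁
      subst hzx
      rw [walk_targets hz2 htne]
      exact List.mem_append_right _ (by simp)
    rw [hA2, List.nodup_append] at nd₂
    exact nd₂.2.2 x₂ (hxx ▸ hx1l) x₂ hx2t rfl
  · -- x₁ is an internal vertex of w₂: contradicts disj₂
    have hx1w2 : x₁ ∈ w₂.map f := by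
      have h1 : x₁ ∈ w₁.map f := by
        rw [walk_targets c₁ hw₁ne]
        exact List.mem_append_right _ (by simp)
      obtain ⟨ed, hed, hfeq⟩ := List.mem_map.mp h1
      have : ed ∈ w₂ := by
        rw [← List.mem_toFinset, ← hfin, List.mem_toFinset]; exact hed
      exact hfeq ▸ List.mem_map_of_mem (f := f) this
    rw [walk_targets c₂ hw₂ne] at hx1w2
    rcases List.mem_append.mp hx1w2 with h | h
    · exact disj₂ x₁ h hx1mem
    · exact hxx (by simpa using h)

theorem seq_cons_inv [DecidableEq E] {u : V} {l : List E} {s : Finset E}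
    {L : List (Finset E)} (h : DCycleSeq ψ u l (s :: L)) :
    ∃ (x : V) (a w1 g : List E), l = a ++ (w1 ++ g) ∧ s = w1.toFinset ∧
      DWalkFrom ψ u x a ∧ (u :: a.map fun e => (ψ e).2).Nodup ∧ w1 ≠ [] ∧
      DWalkFrom ψ x x w1 ∧ (x :: w1.dropLast.map fun e => (ψ e).2).Nodup ∧
      (∀ v ∈ w1.dropLast.map fun e => (ψ e).2,
        v ∉ (u :: a.map fun e => (ψ e).2)) ∧
      DCycleSeq ψ u (a ++ g) L := by
  cases h with
  | cons x a w1 g L ha hand hw1ne hw1 hw1nd hdisj hrec =>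
    exact ⟨x, a, w1, g, rfl, rfl, ha, hand, hw1ne, hw1, hw1nd, hdisj, hrec⟩

theorem inj [DecidableEq V] [DecidableEq E] {e : E} :
    ∀ (L : List (Finset E)) (u : V) (l₁ l₂ : List E),
    DWalkFrom ψ u u l₁ → l₁.Nodup → l₁.getLast? = some e →
    DWalkFrom ψ u u l₂ → l₂.Nodup → l₂.getLast? = some e →
    DCycleSeq ψ u l₁ L → DCycleSeq ψ u l₂ L → l₁ = l₂ := by
  intro L
  induction L with
  | nil => intro u l₁ l₂ _ _ _ _ _ _ h₁ h₂; rw [seq_nil h₁, seq_nil h₂]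
  | cons s L' ih =>
    intro u l₁ l₂ hwk₁ hnd₁ hlast₁ hwk₂ hnd₂ hlast₂ h₁ h₂
    obtain ⟨x₁, a₁, w₁, g₁, hl₁, hs₁, k₁, and₁, w₁ne, c₁, snd₁, dj₁, rec₁⟩ :=
      seq_cons_inv h₁
    obtain ⟨x₂, a₂, w₂, g₂, hl₂, hs₂, k₂, and₂, w₂ne, c₂, snd₂, dj₂, rec₂⟩ :=
      seq_cons_inv h₂
    subst hl₁ hl₂
    have hfin : w₁.toFinset = w₂.toFinset := hs₁ ▸ hs₂
    -- walk decompositions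
    obtain ⟨z, hz1, hz2⟩ := walk_append.mp hwk₁
    obtain rfl : x₁ = z := (walk_end_unique hz1 k₁).symm
    obtain ⟨z', hz3, hz4⟩ := walk_append.mp hz2
    obtain rfl : x₁ = z' := (walk_end_unique hz3 c₁).symm
    obtain ⟨y, hy1, hy2⟩ := walk_append.mp hwk₂
    obtain rfl : x₂ = y := (walk_end_unique hy1 k₂).symm
    obtain ⟨y', hy3, hy4⟩ := walk_append.mp hy2
    obtain rfl : x₂ = y' := (walk_end_unique hy3 c₂).symm
    have hr₁walk : DWalkFrom ψ u u (a₁ ++ g₁) := walk_append.mpr ⟨x₁, k₁, hz4⟩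
    have hr₂walk : DWalkFrom ψ u u (a₂ ++ g₂) := walk_append.mpr ⟨x₂, k₂, hy4⟩
    have hrnd₁ : (a₁ ++ g₁).Nodup :=
      hnd₁.sublist (List.Sublist.append_left (List.sublist_append_right w₁ g₁) a₁)
    have hrnd₂ : (a₂ ++ g₂).Nodup :=
      hnd₂.sublist (List.Sublist.append_left (List.sublist_append_right w₂ g₂) a₂)
    have hwnd₁ : w₁.Nodup := hnd₁.sublist
      ((List.sublist_append_left w₁ g₁).trans (List.sublist_append_right a₁ _))
    have hwnd₂ : w₂.Nodup := hnd₂.sublist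
      ((List.sublist_append_left w₂ g₂).trans (List.sublist_append_right a₂ _))
    -- the remainders are equal
    have hr : a₁ ++ g₁ = a₂ ++ g₂ := by
      cases L' with
      | nil => rw [seq_nil rec₁, seq_nil rec₂]
      | cons s' L'' =>
        have hg₁ : g₁ ≠ [] := by
          rintro rfl
          rw [List.append_nil] at rec₁
          exact cyc_repeat rec₁ and₁
        have hg₂ : g₂ ≠ [] := by
          rintro rfl
          rw [List.append_nil] at rec₂
          exact cyc_repeat rec₂ and₂
        have hlast₁' : (a₁ ++ (w₁ ++ g₁)).getLast? = (a₁ ++ g₁).getLast? := by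
          rw [getLast?_append_left (show w₁ ++ g₁ ≠ [] by simp [hg₁]),
            getLast?_append_left hg₁, getLast?_append_left hg₁]
        have hlast₂' : (a₂ ++ (w₂ ++ g₂)).getLast? = (a₂ ++ g₂).getLast? := by
          rw [getLast?_append_left (show w₂ ++ g₂ ≠ [] by simp [hg₂]),
            getLast?_append_left hg₂, getLast?_append_left hg₂]
        exact ih u _ _ hr₁walk hrnd₁ (hlast₁' ▸ hlast₁) hr₂walk hrnd₂
          (hlast₂' ▸ hlast₂) rec₁ rec₂
    have hlen : a₁.length = a₂.length := by
      rcases Nat.lt_trichotomy a₁.length a₂.length with h|h|h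
      · exact (no_strict hr k₁ k₂ and₂ dj₂ w₁ne w₂ne c₁ c₂ hfin h).elim
      · exact h
      · exact (no_strict hr.symm k₂ k₁ and₁ dj₁ w₂ne w₁ne c₂ c₁ hfin.symm h).elim
    obtain rfl : a₁ = a₂ := by
      have p1 : a₁ <+: a₂ ++ g₂ := ⟨g₁, hr⟩
      exact (List.prefix_of_prefix_length_le p1 (List.prefix_append a₂ g₂)
        hlen.le).eq_of_length hlen
    have hg : g₁ = g₂ := by
      simpa using hr
    obtain rfl : x₁ = x₂ := walk_end_unique k₁ k₂
    have hsrc : (w₁.map fun e => (ψ e).1).Nodup := by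
      rw [walk_sources c₁ w₁ne]; exact snd₁
    have hw : w₁ = w₂ := uniqueWalk c₁ c₂ hsrc hwnd₁ hwnd₂ hfin
    rw [hw, hg]
end Aux

/-- Let `D` be a multi-digraph and fix an edge `e`.  The map sending
each closed trail of `D` ending at `e` to its cycle sequence is injective; moreover, for
every closed trail `w` ending at `e` with cycle sequence `(β₁, …, β_m)`, the edge `e`
belongs to the last cycle `β_m`. -/
theorem stmt_9 {V E : Type} [DecidableEq V] [DecidableEq E]
    (ψ : E → V × V) (hψ : ∀ f : E, (ψ f).1 ≠ (ψ f).2) (e : E) :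
    (∀ (u : V) (l₁ l₂ : List E) (L : List (Finset E)),
      DWalkFrom ψ u u l₁ → l₁.Nodup → l₁.getLast? = some e →
      DWalkFrom ψ u u l₂ → l₂.Nodup → l₂.getLast? = some e →
      DCycleSeq ψ u l₁ L → DCycleSeq ψ u l₂ L → l₁ = l₂) ∧
    (∀ (u : V) (l : List E) (L : List (Finset E)),
      DWalkFrom ψ u u l → l.Nodup → l.getLast? = some e →
      DCycleSeq ψ u l L → ∃ c : Finset E, L.getLast? = some c ∧ e ∈ c) := by
  constructor
  · intro u l₁ l₂ L h1 h2 h3 h4 h5 h6 h7 h8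
    exact Aux.inj L u l₁ l₂ h1 h2 h3 h4 h5 h6 h7 h8
  · intro u l L _ _ hl hc
    exact Aux.lastMem hc e hl
end
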